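/- Let μ be a finite Borel measure on ℝⁿ with finite first moment, ν a finite Borel measure on S^{n-1}, satisfying: (i) ∫⟨x,θ⟩dμ + ∫⟨x,θ⟩dν = 0 for all θ ∈ ℝⁿ (centeredness), (ii) ∫|⟨x,y⟩|dμ(x) + ∫|⟨x,y⟩|dν(x) ≥ c|y| for all y with c > 0. Let φ: ℝⁿ → (-∞,∞] be convex, lsc, with min φ = φ(0). Then for all x ∈ ℝⁿ: φ(x) ≥ (1/μ(ℝⁿ))·( (c/2)|x| - ∫φ* dμ - ∫ φ̄* dν ), where φ̄*(θ) = lim_{λ→∞} φ*(p + λθ)/λ is the horizon (recession) function of φ*. -/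

import Mathlib

open MeasureTheory Filter ENNReal

noncomputable section

/-- Convexity for `(-∞,∞]`-valued functions. -/
def ConvexEReal {n : ℕ} (φ : EuclideanSpace ℝ (Fin n) → EReal) : Prop :=
  ∀ x y : EuclideanSpace ℝ (Fin n), ∀ a b : ℝ, 0 ≤ a → 0 ≤ b → a + b = 1 →
    φ (a • x + b • y) ≤ (a : EReal) * φ x + (b : EReal) * φ y

/-- The Legendre transform. -/
def legendre {n : ℕ} (φ : EuclideanSpace ℝ (Fin n) → EReal)
    (y : EuclideanSpace ℝ (Fin n)) : EReal :=
  ⨆ x : EuclideanSpace ℝ (Fin n), ((inner ℝ x y : ℝ) : EReal) - φ x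

/-- The nonnegative part of an extended real, as `ℝ≥0∞`. -/
def erealPos (x : EReal) : ℝ≥0∞ :=
  if x = ⊤ then ⊤ else ENNReal.ofReal x.toReal

/-- The integral of an `EReal`-valued function, with values in `EReal`
(possibly `+∞`), defined via positive and negative parts. -/
def erealIntegral {n : ℕ} (μ : Measure (EuclideanSpace ℝ (Fin n)))
    (f : EuclideanSpace ℝ (Fin n) → EReal) : EReal :=
  ((∫⁻ x, erealPos (f x) ∂μ : ℝ≥0∞) : EReal) - ((∫⁻ x, erealPos (-(f x)) ∂μ : ℝ≥0∞) : EReal)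

lemma erealPos_mono {a b : EReal} (h : a ≤ b) : erealPos a ≤ erealPos b := by
  unfold erealPos
  by_cases hb : b = ⊤
  · simp [hb]
  · have ha : a ≠ ⊤ := fun h' => hb (top_le_iff.1 (h' ▸ h))
    simp only [ha, hb, if_false]
    by_cases ha' : a = ⊥
    · simp [ha']
    · exact ENNReal.ofReal_le_ofReal (EReal.toReal_le_toReal h ha' hb)

lemma erealPos_coe (r : ℝ) : erealPos (r : EReal) = ENNReal.ofReal r := by
  simp [erealPos, EReal.coe_ne_top]

lemma erealPos_nonpos {a : EReal} (h : a ≤ 0) : erealPos a = 0 := by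
  have := erealPos_mono h
  rw [show ((0 : EReal)) = ((0 : ℝ) : EReal) from rfl, erealPos_coe] at this
  simpa using this

lemma ennreal_coe_eq_coe_toReal (B : ℝ≥0∞) (h : B ≠ ⊤) :
    ((B : EReal)) = ((B.toReal : ℝ) : EReal) := by
  rw [← EReal.toReal_coe_ennreal]
  exact (EReal.coe_toReal (by simpa [EReal.coe_ennreal_eq_top_iff]) (EReal.coe_ennreal_ne_bot B)).symm

/-- Under centeredness of `μ + ν` and the norm lower bound, for any convex lsc
`φ` with `min φ = φ(0)` one has
`φ(x) ≥ (1/μ(ℝⁿ))·((c/2)|x| - ∫ φ* dμ - ∫ φ̄* dν)`, where `φ̄*` is the horizon (recession)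
function of `φ*`. -/
theorem statement11 (n : ℕ)
    (μ ν : Measure (EuclideanSpace ℝ (Fin n)))
    [IsFiniteMeasure μ] [IsFiniteMeasure ν]
    (hμ : μ Set.univ ≠ 0)
    (hmom : Integrable (fun x => ‖x‖) μ)
    (hν : ν {x | ‖x‖ ≠ 1} = 0)
    (hcent : ∀ θ : EuclideanSpace ℝ (Fin n),
      (∫ x, (inner ℝ x θ : ℝ) ∂μ) + ∫ x, (inner ℝ x θ : ℝ) ∂ν = 0)
    (c : ℝ) (hc : 0 < c)
    (hlow : ∀ y, c * ‖y‖ ≤ (∫ x, |(inner ℝ x y : ℝ)| ∂μ) + ∫ x, |(inner ℝ x y : ℝ)| ∂ν)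
    (φ : EuclideanSpace ℝ (Fin n) → EReal)
    (hbot : ∀ x, φ x ≠ ⊥) (hconv : ConvexEReal φ) (hlsc : LowerSemicontinuous φ)
    (hmin0 : ∀ x, φ 0 ≤ φ x) (hfin : φ 0 ≠ ⊤)
    (bar : EuclideanSpace ℝ (Fin n) → EReal)
    (p : EuclideanSpace ℝ (Fin n)) (hp : legendre φ p ≠ ⊤)
    (hbar : ∀ θ : EuclideanSpace ℝ (Fin n),
      Tendsto (fun lam : ℝ => legendre φ (p + lam • θ) * ((lam⁻¹ : ℝ) : EReal))
        atTop (nhds (bar θ))) :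
    ∀ x : EuclideanSpace ℝ (Fin n),
      ((((μ Set.univ).toReal)⁻¹ : ℝ) : EReal) *
        (((c / 2 * ‖x‖ : ℝ) : EReal) - erealIntegral μ (legendre φ) - erealIntegral ν bar)
        ≤ φ x := by
  classical
  intro x
  set L := legendre φ with hLdef
  set t0 : ℝ := (φ 0).toReal with ht0
  have hφ0 : φ 0 = ((t0 : ℝ) : EReal) := (EReal.coe_toReal hfin (hbot 0)).symm
  -- lower bound for the Legendre transform
  have hL0 : ∀ y : EuclideanSpace ℝ (Fin n), ((-t0 : ℝ) : EReal) ≤ L y := by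
    intro y
    have h := le_iSup (fun z : EuclideanSpace ℝ (Fin n) => ((inner ℝ z y : ℝ) : EReal) - φ z) (0 : EuclideanSpace ℝ (Fin n))
    simp only [inner_zero_left] at h
    calc ((-t0 : ℝ) : EReal) = ((0 : ℝ) : EReal) - ((t0 : ℝ) : EReal) := by
          rw [← EReal.coe_sub]; norm_num
      _ = ((0 : ℝ) : EReal) - φ 0 := by rw [← hφ0]
      _ ≤ L y := by exact_mod_cast h
  -- B is finite
  have hBle : (∫⁻ y, erealPos (-(L y)) ∂μ) ≤ ENNReal.ofReal t0 * μ Set.univ := by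
    calc (∫⁻ y, erealPos (-(L y)) ∂μ) ≤ ∫⁻ _, ENNReal.ofReal t0 ∂μ := by
          apply lintegral_mono
          intro y
          rw [← erealPos_coe t0]
          apply erealPos_mono
          rw [EReal.neg_le]
          exact_mod_cast hL0 y
      _ = ENNReal.ofReal t0 * μ Set.univ := by rw [lintegral_const]
  have hBne : (∫⁻ y, erealPos (-(L y)) ∂μ) ≠ ⊤ :=
    ne_top_of_le_ne_top (ENNReal.mul_ne_top ENNReal.ofReal_ne_top (measure_ne_top μ _)) hBle
  -- bar is nonnegative
  have hbar_nonneg : ∀ θ : EuclideanSpace ℝ (Fin n), (0 : EReal) ≤ bar θ := by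
    intro θ
    have htend : Tendsto (fun lam : ℝ => (((-t0) * lam⁻¹ : ℝ) : EReal)) atTop (nhds (0 : EReal)) := by
      rw [show ((0 : EReal)) = (((0:ℝ)) : EReal) from rfl]
      rw [EReal.tendsto_coe]
      simpa using tendsto_inv_atTop_zero.const_mul (-t0)
    refine le_of_tendsto_of_tendsto htend (hbar θ) ?_
    filter_upwards [eventually_ge_atTop (1 : ℝ)] with lam hlam
    have hlam0 : (0:ℝ) ≤ lam⁻¹ := inv_nonneg.2 (by linarith)
    calc (((-t0) * lam⁻¹ : ℝ) : EReal) = ((-t0 : ℝ) : EReal) * ((lam⁻¹ : ℝ) : EReal) := by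
          rw [EReal.coe_mul]
      _ ≤ L (p + lam • θ) * ((lam⁻¹ : ℝ) : EReal) := by
          apply mul_le_mul_of_nonneg_right (hL0 _)
          exact_mod_cast hlam0
  -- D = 0
  have hD : (∫⁻ θ, erealPos (-(bar θ)) ∂ν) = 0 := by
    have : (fun θ : EuclideanSpace ℝ (Fin n) => erealPos (-(bar θ))) = fun _ => 0 := by
      funext θ
      exact erealPos_nonpos (EReal.neg_le.2 (by simpa using hbar_nonneg θ))
    rw [this, lintegral_zero]
  -- mass is positive
  have hm : 0 < (μ Set.univ).toReal := ENNReal.toReal_pos hμ (measure_ne_top μ _)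
  set m : ℝ := (μ Set.univ).toReal with hmdef
  have hminv : 0 < m⁻¹ := inv_pos.2 hm
  -- trivial case φ x = ⊤
  by_cases hφx : φ x = ⊤
  · rw [hφx]; exact le_top
  have hφxt : φ x = (((φ x).toReal : ℝ) : EReal) := (EReal.coe_toReal hφx (hbot x)).symm
  set t : ℝ := (φ x).toReal with htdef
  -- trivial case : ν-integral infinite
  by_cases hC : (∫⁻ θ, erealPos (bar θ) ∂ν) = ⊤
  · have h1 : erealIntegral ν bar = ⊤ := by
      rw [erealIntegral, hC, hD, EReal.coe_ennreal_top, EReal.coe_ennreal_zero, sub_zero]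
    rw [h1, EReal.sub_top, EReal.coe_mul_bot_of_pos hminv]
    exact bot_le
  -- trivial case : μ-integral infinite
  by_cases hA : (∫⁻ y, erealPos (L y) ∂μ) = ⊤
  · have h1 : erealIntegral μ L = ⊤ := by
      rw [erealIntegral, hA, EReal.coe_ennreal_top, ennreal_coe_eq_coe_toReal _ hBne,
        EReal.top_sub_coe]
    rw [show erealIntegral μ (legendre φ) = erealIntegral μ L from rfl, h1, EReal.sub_top,
      EReal.bot_sub, EReal.coe_mul_bot_of_pos hminv]
    exact bot_le
  -- main case
  -- notation
  set g : EuclideanSpace ℝ (Fin n) → ℝ := fun y => max (inner ℝ y x : ℝ) 0 with hgdef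
  have hcont : Continuous fun y : EuclideanSpace ℝ (Fin n) => (inner ℝ y x : ℝ) :=
    Continuous.inner continuous_id continuous_const
  have hgcont : Continuous g := hcont.max continuous_const
  -- integrability
  have hint_μ : Integrable (fun y : EuclideanSpace ℝ (Fin n) => (inner ℝ y x : ℝ)) μ := by
    refine Integrable.mono (hmom.const_mul ‖x‖) hcont.aestronglyMeasurable ?_
    filter_upwards with y
    rw [Real.norm_eq_abs, Real.norm_eq_abs]
    calc |(inner ℝ y x : ℝ)| ≤ ‖y‖ * ‖x‖ := abs_real_inner_le_norm y x
      _ = ‖x‖ * ‖y‖ := by ring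
      _ ≤ |‖x‖ * ‖y‖| := le_abs_self _
  have haeν : ∀ᵐ y ∂ν, ‖y‖ = 1 := by
    rw [ae_iff]
    simpa using hν
  have hint_ν : Integrable (fun y : EuclideanSpace ℝ (Fin n) => (inner ℝ y x : ℝ)) ν := by
    refine Integrable.mono' (integrable_const ‖x‖) hcont.aestronglyMeasurable ?_
    filter_upwards [haeν] with y hy
    rw [Real.norm_eq_abs]
    calc |(inner ℝ y x : ℝ)| ≤ ‖y‖ * ‖x‖ := abs_real_inner_le_norm y x
      _ = ‖x‖ := by rw [hy]; ring
  have habs_g : ∀ y : EuclideanSpace ℝ (Fin n), ‖g y‖ ≤ ‖(inner ℝ y x : ℝ)‖ := by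
    intro y
    show |max (inner ℝ y x : ℝ) 0| ≤ |(inner ℝ y x : ℝ)|
    rcases le_total (inner ℝ y x : ℝ) 0 with h | h
    · rw [max_eq_right h, abs_zero]; exact abs_nonneg _
    · rw [max_eq_left h]
  have hg_int_μ : Integrable g μ := by
    refine Integrable.mono hint_μ hgcont.aestronglyMeasurable ?_
    filter_upwards with y using habs_g y
  have hg_int_ν : Integrable g ν := by
    refine Integrable.mono hint_ν hgcont.aestronglyMeasurable ?_
    filter_upwards with y using habs_g y
  -- key inequality from centering and lower bound
  have habs_eq : ∀ r : ℝ, |r| = 2 * max r 0 - r := by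
    intro r
    rcases le_total r 0 with h | h
    · rw [abs_of_nonpos h, max_eq_right h]; ring
    · rw [abs_of_nonneg h, max_eq_left h]; ring
  have habsint : ∀ (ρ : Measure (EuclideanSpace ℝ (Fin n))), Integrable (fun y : EuclideanSpace ℝ (Fin n) => (inner ℝ y x : ℝ)) ρ →
      Integrable g ρ →
      ∫ y, |(inner ℝ y x : ℝ)| ∂ρ = 2 * (∫ y, g y ∂ρ) - ∫ y, (inner ℝ y x : ℝ) ∂ρ := by
    intro ρ h1 h2
    have : (fun y : EuclideanSpace ℝ (Fin n) => |(inner ℝ y x : ℝ)|) = fun y => 2 * g y - (inner ℝ y x : ℝ) := by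
      funext y; exact habs_eq _
    rw [this, integral_sub (h2.const_mul 2) h1, integral_const_mul]
  have hkey : c * ‖x‖ ≤ 2 * ((∫ y, g y ∂μ) + ∫ y, g y ∂ν) := by
    have h1 := hlow x
    have h2 := hcent x
    rw [habsint μ hint_μ hg_int_μ, habsint ν hint_ν hg_int_ν] at h1
    linarith
  set Gμ : ℝ := ∫ y, g y ∂μ with hGμdef
  set Gν : ℝ := ∫ y, g y ∂ν with hGνdef
  -- t0 ≤ t
  have ht0t : t0 ≤ t := EReal.toReal_le_toReal (hmin0 x) (hbot 0) hφx
  -- pointwise Legendre bound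
  have hLb : ∀ y : EuclideanSpace ℝ (Fin n), (((g y - t : ℝ)) : EReal) ≤ L y := by
    intro y
    have h1 : (((inner ℝ y x : ℝ) - t : ℝ) : EReal) ≤ L y := by
      have h := le_iSup (fun z : EuclideanSpace ℝ (Fin n) => ((inner ℝ z y : ℝ) : EReal) - φ z) x
      rw [hφxt] at h
      calc (((inner ℝ y x : ℝ) - t : ℝ) : EReal)
          = ((inner ℝ x y : ℝ) : EReal) - ((t : ℝ) : EReal) := by
            rw [← EReal.coe_sub, real_inner_comm]
        _ ≤ L y := h
    have h2 : ((-t : ℝ) : EReal) ≤ L y := by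
      refine le_trans ?_ (hL0 y)
      exact_mod_cast neg_le_neg ht0t
    have : g y - t = max ((inner ℝ y x : ℝ) - t) (-t) := by
      show max (inner ℝ y x : ℝ) 0 - t = _
      rcases le_total (inner ℝ y x : ℝ) 0 with h | h
      · rw [max_eq_right h, max_eq_right (by linarith : (inner ℝ y x : ℝ) - t ≤ -t), zero_sub]
      · rw [max_eq_left h, max_eq_left (by linarith : -t ≤ (inner ℝ y x : ℝ) - t)]
    rw [this]
    rcases max_cases ((inner ℝ y x : ℝ) - t) (-t) with ⟨he, _⟩ | ⟨he, _⟩ <;> rw [he]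
    · exact h1
    · exact h2
  -- bounds on lintegrals over μ
  set A := ∫⁻ y, erealPos (L y) ∂μ with hAdef
  set B := ∫⁻ y, erealPos (-(L y)) ∂μ with hBdef
  set P := ∫⁻ y, ENNReal.ofReal (g y - t) ∂μ with hPdef
  set N := ∫⁻ y, ENNReal.ofReal (t - g y) ∂μ with hNdef
  have hPA : P ≤ A := by
    apply lintegral_mono
    intro y
    show ENNReal.ofReal (g y - t) ≤ erealPos (L y)
    rw [← erealPos_coe (g y - t)]
    exact erealPos_mono (hLb y)
  have hBN : B ≤ N := by
    apply lintegral_mono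
    intro y
    show erealPos (-(L y)) ≤ ENNReal.ofReal (t - g y)
    rw [← erealPos_coe (t - g y)]
    apply erealPos_mono
    rw [EReal.neg_le, ← EReal.coe_neg, neg_sub]
    exact hLb y
  have hNfin : N ≠ ⊤ := by
    have : N ≤ ∫⁻ _, ENNReal.ofReal t ∂μ := by
      apply lintegral_mono
      intro y
      apply ENNReal.ofReal_le_ofReal
      have : 0 ≤ g y := le_max_right _ _
      linarith
    rw [lintegral_const] at this
    exact ne_top_of_le_ne_top (ENNReal.mul_ne_top ENNReal.ofReal_ne_top (measure_ne_top μ _)) this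
  have hPfin : P ≠ ⊤ := ne_top_of_le_ne_top hA hPA
  -- the real integral of g - t over μ
  have hh_int : Integrable (fun y : EuclideanSpace ℝ (Fin n) => g y - t) μ := hg_int_μ.sub (integrable_const t)
  have hPN : ∫ y, (g y - t) ∂μ = P.toReal - N.toReal := by
    have e2 : (∫⁻ a, ENNReal.ofReal (-(g a - t)) ∂μ) = N := by
      rw [hNdef]; simp only [neg_sub]
    rw [integral_eq_lintegral_pos_part_sub_lintegral_neg_part hh_int, e2, ← hPdef]
  have hGμ : ∫ y, (g y - t) ∂μ = Gμ - t * m := by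
    rw [integral_sub hg_int_μ (integrable_const t), integral_const]
    simp [hmdef, smul_eq_mul, Measure.real]
    ring
  -- bound for bar over ν
  have hbar_ge : ∀ θ : EuclideanSpace ℝ (Fin n), ((inner ℝ θ x : ℝ) : EReal) ≤ bar θ := by
    intro θ
    have htend : Tendsto (fun lam : ℝ =>
        ((((inner ℝ x p : ℝ) - t) * lam⁻¹ + (inner ℝ x θ : ℝ) : ℝ) : EReal)) atTop
        (nhds (((inner ℝ θ x : ℝ) : EReal))) := by
      rw [EReal.tendsto_coe, real_inner_comm x θ]
      have h0 : Tendsto (fun lam : ℝ => ((inner ℝ x p : ℝ) - t) * lam⁻¹) atTop (nhds 0) := by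
        simpa using tendsto_inv_atTop_zero.const_mul ((inner ℝ x p : ℝ) - t)
      simpa using h0.add_const (inner ℝ x θ : ℝ)
    refine le_of_tendsto_of_tendsto htend (hbar θ) ?_
    filter_upwards [eventually_ge_atTop (1 : ℝ)] with lam hlam
    have hlampos : (0:ℝ) < lam := by linarith
    have hlam0 : (0:ℝ) ≤ lam⁻¹ := inv_nonneg.2 hlampos.le
    have hF : (((inner ℝ x (p + lam • θ) : ℝ) - t : ℝ) : EReal) ≤ L (p + lam • θ) := by
      have h := le_iSup (fun z : EuclideanSpace ℝ (Fin n) => ((inner ℝ z (p + lam • θ) : ℝ) : EReal) - φ z) x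
      rw [hφxt] at h
      calc (((inner ℝ x (p + lam • θ) : ℝ) - t : ℝ) : EReal)
          = ((inner ℝ x (p + lam • θ) : ℝ) : EReal) - ((t : ℝ) : EReal) := by
            rw [← EReal.coe_sub]
        _ ≤ L (p + lam • θ) := h
    have heq : ((inner ℝ x p : ℝ) - t) * lam⁻¹ + (inner ℝ x θ : ℝ)
        = ((inner ℝ x (p + lam • θ) : ℝ) - t) * lam⁻¹ := by
      rw [inner_add_right, real_inner_smul_right]
      field_simp
      ring
    rw [heq]
    calc ((((inner ℝ x (p + lam • θ) : ℝ) - t) * lam⁻¹ : ℝ) : EReal)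
        = (((inner ℝ x (p + lam • θ) : ℝ) - t : ℝ) : EReal) * ((lam⁻¹ : ℝ) : EReal) := by
          rw [EReal.coe_mul]
      _ ≤ L (p + lam • θ) * ((lam⁻¹ : ℝ) : EReal) := by
          apply mul_le_mul_of_nonneg_right hF
          exact_mod_cast hlam0
  -- lintegral bound over ν
  set C := ∫⁻ θ, erealPos (bar θ) ∂ν with hCdef
  set Q := ∫⁻ θ, ENNReal.ofReal (g θ) ∂ν with hQdef
  have hQC : Q ≤ C := by
    apply lintegral_mono
    intro θ
    show ENNReal.ofReal (g θ) ≤ erealPos (bar θ)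
    rw [← erealPos_coe (g θ)]
    apply erealPos_mono
    rcases max_cases ((inner ℝ θ x : ℝ)) (0:ℝ) with ⟨he, _⟩ | ⟨he, _⟩ <;>
      rw [hgdef] <;> simp only [he]
    · exact hbar_ge θ
    · exact_mod_cast hbar_nonneg θ
  have hQfin : Q ≠ ⊤ := ne_top_of_le_ne_top hC hQC
  have hGν : Gν = Q.toReal := by
    rw [hGνdef, hQdef, integral_eq_lintegral_of_nonneg_ae
      (Filter.Eventually.of_forall fun y => (le_max_right _ _ : (0:ℝ) ≤ g y))
      hgcont.aestronglyMeasurable]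
  -- final numeric inequality
  have hAB : P.toReal - N.toReal ≤ A.toReal - B.toReal := by
    have h1 : P.toReal ≤ A.toReal := ENNReal.toReal_mono hA hPA
    have h2 : B.toReal ≤ N.toReal := ENNReal.toReal_mono hNfin hBN
    linarith
  have hCQ : Q.toReal ≤ C.toReal := ENNReal.toReal_mono hC hQC
  set I₁ : ℝ := A.toReal - B.toReal with hI₁
  set I₂ : ℝ := C.toReal with hI₂
  have hfinal : m⁻¹ * (c / 2 * ‖x‖ - I₁ - I₂) ≤ t := by
    have h1 : Gμ - t * m ≤ I₁ := by rw [← hGμ, hPN]; exact hAB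
    have h2 : Gν ≤ I₂ := by rw [hGν]; exact hCQ
    have h3 : c / 2 * ‖x‖ - I₁ - I₂ ≤ t * m := by linarith
    calc m⁻¹ * (c / 2 * ‖x‖ - I₁ - I₂) ≤ m⁻¹ * (t * m) :=
          mul_le_mul_of_nonneg_left h3 hminv.le
      _ = t := by field_simp
  -- convert to EReal
  have hEμ : erealIntegral μ (legendre φ) = ((I₁ : ℝ) : EReal) := by
    rw [show erealIntegral μ (legendre φ) = ((A : EReal)) - ((B : EReal)) from rfl,
      ennreal_coe_eq_coe_toReal A hA, ennreal_coe_eq_coe_toReal B hBne, ← EReal.coe_sub]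
  have hEν : erealIntegral ν bar = ((I₂ : ℝ) : EReal) := by
    rw [show erealIntegral ν bar = ((C : EReal)) - ((∫⁻ θ, erealPos (-(bar θ)) ∂ν : ℝ≥0∞) : EReal)
        from rfl, hD, EReal.coe_ennreal_zero, sub_zero, ennreal_coe_eq_coe_toReal C hC]
  rw [hEμ, hEν, hφxt, ← EReal.coe_sub, ← EReal.coe_sub, ← EReal.coe_mul]
  exact_mod_cast hfinal

end
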